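/- The $3\times 3$ matrix $A = \begin{pmatrix} -1 & 0 & 1 \\ 0 & 1 & 1 \\ 1 & 1 & 0 \end{pmatrix}$ satisfies $\|\sigma(A)\|_* > \|A\|_*$, where $\sigma$ is the entrywise ReLU and $\|\cdot\|_*$ the nuclear norm. In particular, the inequality $\|\sigma(M)\|_* \le \|M\|_*$ fails for general square matrices $M$. -/

import Mathlib

open Matrix BigOperators

noncomputable def frobSq {m n : ℕ} (A : Matrix (Fin m) (Fin n) ℝ) : ℝ :=
  ∑ i, ∑ j, (A i j)^2

noncomputable def singVals {m n : ℕ} (A : Matrix (Fin m) (Fin n) ℝ) : Fin n → ℝ :=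
  fun i => Real.sqrt ((Matrix.posSemidef_conjTranspose_mul_self A).isHermitian.eigenvalues i)

noncomputable def nuclearNorm {m n : ℕ} (A : Matrix (Fin m) (Fin n) ℝ) : ℝ :=
  ∑ i, singVals A i

noncomputable def relu : ℝ → ℝ := fun t => max t 0

lemma eig_det_zero {n : ℕ} {M : Matrix (Fin n) (Fin n) ℝ} (hM : M.IsHermitian) (i : Fin n) :
    Matrix.det (hM.eigenvalues i • (1 : Matrix (Fin n) (Fin n) ℝ) - M) = 0 := by
  have h := hM.eigenvalues_mem_spectrum_real i
  rw [spectrum.mem_iff, Algebra.algebraMap_eq_smul_one] at h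
  by_contra hd
  exact h ((Matrix.isUnit_iff_isUnit_det _).mpr (isUnit_iff_ne_zero.mpr hd))

lemma trace_eq_sum_eig {n : ℕ} {M : Matrix (Fin n) (Fin n) ℝ} (hM : M.IsHermitian) :
    M.trace = ∑ i, hM.eigenvalues i := by
  rw [hM.trace_eq_sum_eigenvalues]
  simp

lemma sqrt_ge_of {a x : ℝ} (ha : 0 ≤ a) (h : a^2 ≤ x) : a ≤ Real.sqrt x := by
  calc a = Real.sqrt (a^2) := (Real.sqrt_sq ha).symm
  _ ≤ Real.sqrt x := Real.sqrt_le_sqrt h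

lemma sqrt_le_of {a x : ℝ} (ha : 0 ≤ a) (h : x ≤ a^2) : Real.sqrt x ≤ a := by
  calc Real.sqrt x ≤ Real.sqrt (a^2) := Real.sqrt_le_sqrt h
  _ = a := Real.sqrt_sq ha

lemma nnA_le : nuclearNorm (!![-1, 0, 1; 0, 1, 1; 1, 1, 0] : Matrix (Fin 3) (Fin 3) ℝ) ≤ 3.465 := by
  have hC : (!![-1, 0, 1; 0, 1, 1; 1, 1, 0] : Matrix (Fin 3) (Fin 3) ℝ)ᴴ *
      !![-1, 0, 1; 0, 1, 1; 1, 1, 0] = !![2,1,-1;1,2,1;-1,1,2] := by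
    ext i j
    fin_cases i <;> fin_cases j <;>
      simp [Matrix.mul_apply, Fin.sum_univ_three, Matrix.conjTranspose_apply,
        Matrix.transpose_apply, Matrix.vecHead, Matrix.vecTail] <;> norm_num
  have key : ∀ x : ℝ,
      Matrix.det (x • (1 : Matrix (Fin 3) (Fin 3) ℝ) -
        (!![-1, 0, 1; 0, 1, 1; 1, 1, 0] : Matrix (Fin 3) (Fin 3) ℝ)ᴴ *
          !![-1, 0, 1; 0, 1, 1; 1, 1, 0]) = 0 → x = 0 ∨ x = 3 := by
    intro x h
    rw [hC, Matrix.det_fin_three] at h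
    simp [Matrix.smul_apply, Matrix.one_apply, Matrix.sub_apply] at h
    have h2 : x * (x - 3)^2 = 0 := by nlinarith [h]
    rcases mul_eq_zero.mp h2 with h3 | h3
    · exact Or.inl h3
    · right
      have := pow_eq_zero_iff (n := 2) (by norm_num) |>.mp h3
      linarith
  have hd : ∀ i : Fin 3, (Matrix.posSemidef_conjTranspose_mul_self
      (!![-1, 0, 1; 0, 1, 1; 1, 1, 0] : Matrix (Fin 3) (Fin 3) ℝ)).isHermitian.eigenvalues i = 0 ∨
      (Matrix.posSemidef_conjTranspose_mul_self
      (!![-1, 0, 1; 0, 1, 1; 1, 1, 0] : Matrix (Fin 3) (Fin 3) ℝ)).isHermitian.eigenvalues i = 3 :=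
    fun i => key _ (eig_det_zero _ i)
  have hsum : ∑ i, (Matrix.posSemidef_conjTranspose_mul_self
      (!![-1, 0, 1; 0, 1, 1; 1, 1, 0] : Matrix (Fin 3) (Fin 3) ℝ)).isHermitian.eigenvalues i
      = 6 := by
    rw [← trace_eq_sum_eig, hC, Matrix.trace_fin_three]
    show (2:ℝ) + 2 + 2 = 6
    norm_num
  have hs3 : Real.sqrt 3 ≤ 1.7325 := sqrt_le_of (by norm_num) (by norm_num)
  simp only [nuclearNorm, singVals, Fin.sum_univ_three] at hsum ⊢
  rcases hd 0 with h0 | h0 <;> rcases hd 1 with h1 | h1 <;> rcases hd 2 with h2 | h2 <;>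
    rw [h0, h1, h2] at hsum ⊢ <;> first
      | (simp only [Real.sqrt_zero]; linarith)
      | linarith
      | (norm_num at hsum; done)


set_option maxHeartbeats 1000000 in
lemma nnB_ge : 3.479 ≤ nuclearNorm (!![0, 0, 1; 0, 1, 1; 1, 1, 0] : Matrix (Fin 3) (Fin 3) ℝ) := by
  have hC : (!![0, 0, 1; 0, 1, 1; 1, 1, 0] : Matrix (Fin 3) (Fin 3) ℝ)ᴴ *
      !![0, 0, 1; 0, 1, 1; 1, 1, 0] = !![1,1,0;1,2,1;0,1,2] := by
    ext i j
    fin_cases i <;> fin_cases j <;>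
      simp [Matrix.mul_apply, Fin.sum_univ_three, Matrix.conjTranspose_apply,
        Matrix.transpose_apply, Matrix.vecHead, Matrix.vecTail] <;> norm_num
  have key : ∀ x : ℝ, 0 ≤ x →
      Matrix.det (x • (1 : Matrix (Fin 3) (Fin 3) ℝ) -
        (!![0, 0, 1; 0, 1, 1; 1, 1, 0] : Matrix (Fin 3) (Fin 3) ℝ)ᴴ *
          !![0, 0, 1; 0, 1, 1; 1, 1, 0]) = 0 →
      (0.19 ≤ x ∧ x ≤ 0.2 ∧ 0.435 ≤ Real.sqrt x) ∨
      (1.55 ≤ x ∧ x ≤ 1.56 ∧ 1.244 ≤ Real.sqrt x) ∨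
      (3.24 ≤ x ∧ x ≤ 3.25 ∧ 1.8 ≤ Real.sqrt x) := by
    intro x hx h
    rw [hC, Matrix.det_fin_three] at h
    simp [Matrix.smul_apply, Matrix.one_apply, Matrix.sub_apply] at h
    have hq : x^3 - 5*x^2 + 6*x - 1 = 0 := by nlinarith [h]
    rcases le_or_gt x 0.2 with h1 | h1
    · have hl : (0.19:ℝ) ≤ x := by
        by_contra hlt
        push_neg at hlt
        nlinarith [mul_nonneg hx hx, mul_nonneg (mul_nonneg hx hx) hx,
          mul_nonneg hx (le_of_lt (by linarith : (0:ℝ) < 0.19 - x))]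
      exact Or.inl ⟨hl, h1, sqrt_ge_of (by norm_num) (by nlinarith)⟩
    rcases le_or_gt x 1.56 with h2 | h2
    · have hl : (1.55:ℝ) ≤ x := by
        by_contra hlt
        push_neg at hlt
        nlinarith [mul_pos (by linarith : (0:ℝ) < x - 0.2) (by linarith : (0:ℝ) < 1.55 - x),
          sq_nonneg x, mul_nonneg hx hx]
      exact Or.inr (Or.inl ⟨hl, h2, sqrt_ge_of (by norm_num) (by nlinarith)⟩)
    have hl : (3.24:ℝ) ≤ x := by
      by_contra hlt
      push_neg at hlt
      nlinarith [mul_pos (by linarith : (0:ℝ) < x - 1.56) (by linarith : (0:ℝ) < 3.24 - x),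
        sq_nonneg x]
    have hu : x ≤ 3.25 := by
      by_contra hlt
      push_neg at hlt
      nlinarith [mul_pos (by linarith : (0:ℝ) < x - 3.25) (by linarith : (0:ℝ) < x - 1.56),
        sq_nonneg x, mul_pos (by linarith : (0:ℝ) < x - 3.25) (by linarith : (0:ℝ) < x)]
    exact Or.inr (Or.inr ⟨hl, hu, sqrt_ge_of (by norm_num) (by nlinarith)⟩)
  have hsum : ∑ i, (Matrix.posSemidef_conjTranspose_mul_self
      (!![0, 0, 1; 0, 1, 1; 1, 1, 0] : Matrix (Fin 3) (Fin 3) ℝ)).isHermitian.eigenvalues i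
      = 5 := by
    rw [← trace_eq_sum_eig, hC, Matrix.trace_fin_three]
    show (1:ℝ) + 2 + 2 = 5
    norm_num
  have hd := fun i : Fin 3 => key _ ((Matrix.posSemidef_conjTranspose_mul_self
      (!![0, 0, 1; 0, 1, 1; 1, 1, 0] : Matrix (Fin 3) (Fin 3) ℝ)).eigenvalues_nonneg i)
      (eig_det_zero _ i)
  simp only [nuclearNorm, singVals, Fin.sum_univ_three] at hsum ⊢
  rcases hd 0 with ⟨a0,b0,c0⟩ | ⟨a0,b0,c0⟩ | ⟨a0,b0,c0⟩ <;>
    rcases hd 1 with ⟨a1,b1,c1⟩ | ⟨a1,b1,c1⟩ | ⟨a1,b1,c1⟩ <;>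
    rcases hd 2 with ⟨a2,b2,c2⟩ | ⟨a2,b2,c2⟩ | ⟨a2,b2,c2⟩ <;>
    linarith

lemma map_relu_eq : (!![-1, 0, 1; 0, 1, 1; 1, 1, 0] : Matrix (Fin 3) (Fin 3) ℝ).map relu =
    !![0, 0, 1; 0, 1, 1; 1, 1, 0] := by
  ext i j
  fin_cases i <;> fin_cases j <;> simp [relu, Matrix.map_apply, Matrix.vecHead, Matrix.vecTail] <;> norm_num

lemma main_ineq :
    nuclearNorm ((!![-1, 0, 1; 0, 1, 1; 1, 1, 0] : Matrix (Fin 3) (Fin 3) ℝ).map relu) >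
      nuclearNorm (!![-1, 0, 1; 0, 1, 1; 1, 1, 0] : Matrix (Fin 3) (Fin 3) ℝ) := by
  rw [map_relu_eq]
  calc nuclearNorm (!![-1, 0, 1; 0, 1, 1; 1, 1, 0] : Matrix (Fin 3) (Fin 3) ℝ) ≤ 3.465 := nnA_le
  _ < 3.479 := by norm_num
  _ ≤ nuclearNorm (!![0, 0, 1; 0, 1, 1; 1, 1, 0] : Matrix (Fin 3) (Fin 3) ℝ) := nnB_ge

theorem stmt_11 :
    (letI A : Matrix (Fin 3) (Fin 3) ℝ := !![-1, 0, 1; 0, 1, 1; 1, 1, 0]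
     nuclearNorm (A.map relu) > nuclearNorm A) ∧
    ¬ ∀ M : Matrix (Fin 3) (Fin 3) ℝ, nuclearNorm (M.map relu) ≤ nuclearNorm M := by
  refine ⟨main_ineq, fun h => absurd (h _) (not_le.mpr main_ineq)⟩
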